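/- For every odd integer k ≥ 3, Σ d(n₁,n₂)·d(n₁, 2k - n₂) taken over pairs with n₁ + n₂ odd, n₁ ∈ {0,1}, 0 < n₂ < 2k, n₂ ≠ k, equals 0; equivalently, every product d(n)·d(-n) over anti-invariant characters vanishes, where d(n₁,n₂) := -1 + frac(-n₁/2) + frac(-n₂/2) + frac(-n₂/k) + frac(-(k n₁ + (k-2) n₂)/(2k)). -/

import Mathlib

/-- The fractional part of a rational number. -/
noncomputable def frac (x : ℚ) : ℚ := Int.fract x

/-- The eigenspace dimension formula for the character `(n₁, n₂)` of `C₂ × C₂ₖ`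
with monodromy matrix `A = ((k,0,0,k),(0,k,2,k-2))`. -/
noncomputable def d (k n₁ n₂ : ℤ) : ℚ :=
  -1 + frac (-(n₁ : ℚ) / 2) + frac (-(n₂ : ℚ) / 2) + frac (-(n₂ : ℚ) / k)
    + frac (-((k * n₁ + (k - 2) * n₂ : ℤ) : ℚ) / (2 * k))

private lemma fract_int_div (m n : ℤ) (hn : 0 < n) :
    Int.fract ((m : ℚ) / (n : ℚ)) = ((m % n : ℤ) : ℚ) / (n : ℚ) := by
  lift n to ℕ using hn.le
  have h := Int.fract_div_intCast_eq_div_intCast_mod (k := ℚ) (m := m) (n := n)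
  push_cast at h ⊢
  exact h

private lemma emod_eq (a b n : ℤ) (hdvd : n ∣ a - b) (hb : 0 ≤ b) (hb2 : b < n) :
    a % n = b := by
  obtain ⟨c, hc⟩ := hdvd
  have : a = b + n * c := by linarith
  rw [this, Int.add_mul_emod_self_left, Int.emod_eq_of_lt hb hb2]

private lemma r_pos (k n₂ q r : ℤ) (hk : 3 ≤ k) (h1 : 1 ≤ n₂) (h2 : n₂ ≤ 2 * k - 1)
    (hne : n₂ ≠ k) (hq : n₂ - r = k * q) (hr0 : 0 ≤ r) (hr1 : r < k) : 1 ≤ r := by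
  rcases lt_or_ge r 1 with h | h
  · exfalso
    have hr : r = 0 := by omega
    have hn2 : n₂ = k * q := by omega
    have hq1 : 1 ≤ q := by nlinarith
    have hq2 : q ≤ 1 := by nlinarith
    have hq3 : q = 1 := le_antisymm hq2 hq1
    rw [hq3] at hn2
    exact hne (by omega)
  · exact h

private lemma d_eq (k n₁ n₂ : ℤ) (hk : 3 ≤ k) (hkodd : Odd k)
    (hn₁ : n₁ = 0 ∨ n₁ = 1) (h1 : 1 ≤ n₂) (h2 : n₂ ≤ 2 * k - 1) (hne : n₂ ≠ k)
    (hodd : Odd (n₁ + n₂)) :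
    d k n₁ n₂ = if 2 * (n₂ % k) < k then 1 else 0 := by
  obtain ⟨j, hj⟩ := hkodd
  obtain ⟨m, hm⟩ := hodd
  have hk0 : (0:ℤ) < k := by omega
  have h2k0 : (0:ℤ) < 2 * k := by omega
  set r := n₂ % k with hr
  have hrange : 0 ≤ r ∧ r < k := ⟨Int.emod_nonneg _ hk0.ne', Int.emod_lt_of_pos _ hk0⟩
  obtain ⟨q, hq⟩ : k ∣ n₂ - r := Int.dvd_self_sub_of_emod_eq rfl
  have hr1 : 1 ≤ r := r_pos k n₂ q r hk h1 h2 hne hq hrange.1 hrange.2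
  have hrne : 2 * r ≠ k := by omega
  have ha : (-n₁) % 2 = n₁ := by rcases hn₁ with h | h <;> simp [h]
  have hb : (-n₂) % 2 = 1 - n₁ := by omega
  have hc : (-n₂) % k = k - r :=
    emod_eq _ _ _ ⟨-q - 1, by linarith⟩ (by omega) (by omega)
  have he : (-(k * n₁ + (k - 2) * n₂)) % (2 * k)
      = (if 2 * r < k then k + 2 * r else 2 * r - k) := by
    split_ifs with hlt
    · exact emod_eq _ _ _ ⟨q - m - 1, by linear_combination (-k) * hm + 2 * hq⟩
        (by omega) (by omega)
    · exact emod_eq _ _ _ ⟨q - m, by linear_combination (-k) * hm + 2 * hq⟩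
        (by omega) (by omega)
  unfold d frac
  have e1 : -(n₁ : ℚ) / 2 = (((-n₁ : ℤ)) : ℚ) / ((2 : ℤ) : ℚ) := by push_cast; ring
  have e2 : -(n₂ : ℚ) / 2 = (((-n₂ : ℤ)) : ℚ) / ((2 : ℤ) : ℚ) := by push_cast; ring
  have e3 : -(n₂ : ℚ) / (k : ℚ) = (((-n₂ : ℤ)) : ℚ) / ((k : ℤ) : ℚ) := by push_cast; ring
  have e4 : -(((k * n₁ + (k - 2) * n₂ : ℤ)) : ℚ) / (2 * (k : ℚ))
      = (((-(k * n₁ + (k - 2) * n₂) : ℤ)) : ℚ) / (((2 * k : ℤ)) : ℚ) := by push_cast; ring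
  have hkQ : ((k : ℚ)) ≠ 0 := by exact_mod_cast hk0.ne'
  rw [e1, e2, e3, e4, fract_int_div _ _ (by norm_num), fract_int_div _ _ (by norm_num),
    fract_int_div _ _ hk0, fract_int_div _ _ h2k0, ha, hb, hc, he]
  split_ifs with hlt <;> push_cast <;> field_simp <;> ring

private lemma prod_zero (k n₁ n₂ : ℤ) (hk : 3 ≤ k) (hkodd : Odd k)
    (hn₁ : n₁ = 0 ∨ n₁ = 1) (h1 : 1 ≤ n₂) (h2 : n₂ ≤ 2 * k - 1) (hne : n₂ ≠ k)
    (hodd : Odd (n₁ + n₂)) :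
    d k n₁ n₂ * d k n₁ (2 * k - n₂) = 0 := by
  have hk0 : (0:ℤ) < k := by omega
  have h1' : 1 ≤ 2 * k - n₂ := by omega
  have h2' : 2 * k - n₂ ≤ 2 * k - 1 := by omega
  have hne' : 2 * k - n₂ ≠ k := by omega
  have hodd' : Odd (n₁ + (2 * k - n₂)) := by
    obtain ⟨m, hm⟩ := hodd; exact ⟨m + k - n₂, by omega⟩
  have hodd2 : Odd (n₁ + n₂) := by
    obtain ⟨m, hm⟩ := hodd'; exact ⟨m - k + n₂, by omega⟩
  rw [d_eq k n₁ n₂ hk hkodd hn₁ h1 h2 hne hodd2,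
    d_eq k n₁ (2 * k - n₂) hk hkodd hn₁ h1' h2' hne' hodd']
  obtain ⟨j, hj⟩ := hkodd
  set r := n₂ % k with hr
  have hrange : 0 ≤ r ∧ r < k := ⟨Int.emod_nonneg _ hk0.ne', Int.emod_lt_of_pos _ hk0⟩
  obtain ⟨q, hq⟩ : k ∣ n₂ - r := Int.dvd_self_sub_of_emod_eq rfl
  have hr1 : 1 ≤ r := r_pos k n₂ q r hk h1 h2 hne hq hrange.1 hrange.2
  have hmod : (2 * k - n₂) % k = k - r :=
    emod_eq _ _ _ ⟨1 - q, by linarith⟩ (by omega) (by omega)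
  rw [hmod]
  split_ifs with ha hb hb <;> first | omega | ring

theorem stmt8 (k : ℤ) (hk : 3 ≤ k) (hkodd : Odd k) :
    (∑ p ∈ ((({0, 1} : Finset ℤ) ×ˢ ((Finset.Icc 1 (2 * k - 1)).erase k)).filter
        (fun p => Odd (p.1 + p.2))),
      d k p.1 p.2 * d k p.1 (2 * k - p.2) = 0) ∧
    (∀ p ∈ ((({0, 1} : Finset ℤ) ×ˢ ((Finset.Icc 1 (2 * k - 1)).erase k)).filter
        (fun p => Odd (p.1 + p.2))),
      d k p.1 p.2 * d k p.1 (2 * k - p.2) = 0) := by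
  have key : ∀ p ∈ ((({0, 1} : Finset ℤ) ×ˢ ((Finset.Icc 1 (2 * k - 1)).erase k)).filter
        (fun p => Odd (p.1 + p.2))),
      d k p.1 p.2 * d k p.1 (2 * k - p.2) = 0 := by
    rintro ⟨n₁, n₂⟩ hp
    simp only [Finset.mem_filter, Finset.mem_product, Finset.mem_erase, Finset.mem_Icc,
      Finset.mem_insert, Finset.mem_singleton] at hp
    exact prod_zero k n₁ n₂ hk hkodd hp.1.1 hp.1.2.2.1 hp.1.2.2.2 hp.1.2.1 hp.2
  exact ⟨Finset.sum_eq_zero key, key⟩
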